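/- An ω-well-filtered T0 space X is locally compact if and only if it is core compact. -/

import Mathlib

/-- The specialization order: `x ≤ y` iff `x ∈ cl {y}`. -/
def specLE {X : Type*} [TopologicalSpace X] (x y : X) : Prop := x ∈ closure ({y} : Set X)

/-- `↑x` in the specialization order. -/
def upClo {X : Type*} [TopologicalSpace X] (x : X) : Set X := {y | specLE x y}

/-- A set is saturated iff it is an upper set in the specialization order. -/
def IsSaturatedSet {X : Type*} [TopologicalSpace X] (K : Set X) : Prop :=
  ∀ x y, x ∈ K → specLE x y → y ∈ K

/-- `X` is ω-well-filtered: for every countable filtered family of nonempty compact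
saturated sets and every open `U`, `⋂ Kᵢ ⊆ U` implies some `Kᵢ ⊆ U`. -/
def OmegaWellFiltered (X : Type*) [TopologicalSpace X] : Prop :=
  ∀ K : ℕ → Set X, (∀ n, (K n).Nonempty ∧ IsCompact (K n) ∧ IsSaturatedSet (K n)) →
    (∀ m n, ∃ k, K k ⊆ K m ∩ K n) →
    ∀ U : Set X, IsOpen U → (⋂ n, K n) ⊆ U → ∃ n, K n ⊆ U

/-- `X` is an ω-d-space: the closure of every countable directed subset
(in the specialization order) has a generic point. -/
def OmegaDSpace (X : Type*) [TopologicalSpace X] : Prop :=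
  ∀ D : Set X, D.Countable → D.Nonempty → DirectedOn specLE D →
    ∃ x, closure D = closure ({x} : Set X)

section OWF

variable {X : Type*} [TopologicalSpace X]

lemma specLE_refl (x : X) : specLE x x := subset_closure rfl

lemma specLE_trans {x y z : X} (hxy : specLE x y) (hyz : specLE y z) : specLE x z := by
  have h : closure ({y} : Set X) ⊆ closure ({z} : Set X) :=
    closure_minimal (Set.singleton_subset_iff.2 hyz) isClosed_closure
  exact h hxy

lemma mem_open_of_specLE {U : Set X} (hU : IsOpen U) {x y : X} (hx : x ∈ U)
    (hxy : specLE x y) : y ∈ U := by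
  rcases mem_closure_iff.1 hxy U hU hx with ⟨z, hzU, hz⟩
  rcases hz with rfl
  exact hzU

lemma mem_upClo_self (x : X) : x ∈ upClo x := specLE_refl x

lemma upClo_subset_open {U : Set X} (hU : IsOpen U) {x : X} (hx : x ∈ U) : upClo x ⊆ U :=
  fun _ hy => mem_open_of_specLE hU hx hy

lemma isSaturatedSet_upClo (x : X) : IsSaturatedSet (upClo x) :=
  fun _ z hy hyz => specLE_trans hy hyz

lemma isCompact_upClo (x : X) : IsCompact (upClo x) := by
  apply isCompact_of_finite_subcover
  intro ι U hU hcov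
  rcases Set.mem_iUnion.1 (hcov (mem_upClo_self x)) with ⟨i, hi⟩
  refine ⟨{i}, fun y hy => Set.mem_iUnion₂.2 ⟨i, Finset.mem_singleton_self i, ?_⟩⟩
  exact upClo_subset_open (hU i) hi hy

/-- The way-below relation between sets, as used in the statement of the theorem. -/
def WB (V U : Set X) : Prop :=
  ∀ S : Set (Set X), (∀ W ∈ S, IsOpen W) → U ⊆ ⋃₀ S → ∃ F ⊆ S, F.Finite ∧ V ⊆ ⋃₀ F

lemma WB.subset {V U : Set X} (hU : IsOpen U) (h : WB V U) : V ⊆ U := by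
  rcases h {U} (by simpa using hU) (by simp) with ⟨F, hFS, _, hVF⟩
  refine hVF.trans ?_
  intro y hy
  rcases hy with ⟨W, hWF, hyW⟩
  rcases hFS hWF with rfl
  exact hyW

lemma WB.mono_left {V' V U : Set X} (hV : V' ⊆ V) (h : WB V U) : WB V' U := by
  intro S hS hUS
  rcases h S hS hUS with ⟨F, h1, h2, h3⟩
  exact ⟨F, h1, h2, hV.trans h3⟩

lemma WB.mono_right {V U U' : Set X} (h : WB V U) (hUU' : U ⊆ U') : WB V U' := by
  intro S hS hUS
  exact h S hS (hUU'.trans hUS)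

lemma WB.union {V₁ V₂ U : Set X} (h₁ : WB V₁ U) (h₂ : WB V₂ U) : WB (V₁ ∪ V₂) U := by
  intro S hS hUS
  rcases h₁ S hS hUS with ⟨F₁, hF₁, hf₁, hV₁⟩
  rcases h₂ S hS hUS with ⟨F₂, hF₂, hf₂, hV₂⟩
  refine ⟨F₁ ∪ F₂, Set.union_subset hF₁ hF₂, hf₁.union hf₂, ?_⟩
  rw [Set.sUnion_union]
  exact Set.union_subset_union hV₁ hV₂

lemma WB.empty (U : Set X) : WB (∅ : Set X) U := by
  intro S hS hUS
  exact ⟨∅, by simp, Set.finite_empty, by simp⟩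

lemma WB.sUnion {G : Set (Set X)} (hfin : G.Finite) {U : Set X}
    (h : ∀ A ∈ G, WB A U) : WB (⋃₀ G) U := by
  refine Set.Finite.induction_on (motive := fun G _ => (∀ A ∈ G, WB A U) → WB (⋃₀ G) U) G hfin
    (fun _ => by simpa using WB.empty U) ?_ h
  intro a s _ _ ih h'
  rw [Set.sUnion_insert]
  exact (h' a (Set.mem_insert _ _)).union (ih fun A hA => h' A (Set.mem_insert_of_mem _ hA))

/-- Core compactness (the right-hand side of the theorem). -/
def CoreCompact (X : Type*) [TopologicalSpace X] : Prop :=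
  ∀ U : Set X, IsOpen U → ∀ x ∈ U, ∃ V : Set X, IsOpen V ∧ x ∈ V ∧ WB V U

/-- Interpolation for the way-below relation in a core compact space. -/
lemma wb_interpolate (cc : CoreCompact X) {U V : Set X} (hU : IsOpen U) (hV : WB V U) :
    ∃ W : Set X, IsOpen W ∧ WB V W ∧ WB W U ∧ W ⊆ U := by
  classical
  set S : Set (Set X) :=
    {V' | IsOpen V' ∧ ∃ W', IsOpen W' ∧ WB V' W' ∧ WB W' U} with hS
  have hSopen : ∀ W ∈ S, IsOpen W := fun W hW => hW.1
  have hcov : U ⊆ ⋃₀ S := by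
    intro x hx
    rcases cc U hU x hx with ⟨Vx, hVxo, hxVx, hVxU⟩
    rcases cc Vx hVxo x hxVx with ⟨V'x, hV'o, hxV', hV'Vx⟩
    exact ⟨V'x, ⟨hV'o, Vx, hVxo, hV'Vx, hVxU⟩, hxV'⟩
  rcases hV S hSopen hcov with ⟨F, hFS, hFfin, hVF⟩
  have hch : ∀ f ∈ F, ∃ W', IsOpen W' ∧ WB f W' ∧ WB W' U := fun f hf => (hFS hf).2
  choose! g hg1 hg2 hg3 using hch
  refine ⟨⋃₀ ((fun f => g f) '' F), ?_, ?_, ?_, ?_⟩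
  · exact isOpen_sUnion (by rintro - ⟨f, hf, rfl⟩; exact hg1 f hf)
  · refine WB.mono_left hVF (WB.sUnion hFfin ?_)
    intro f hf
    exact (hg2 f hf).mono_right (Set.subset_sUnion_of_mem ⟨f, hf, rfl⟩)
  · refine WB.sUnion (hFfin.image _) ?_
    rintro - ⟨f, hf, rfl⟩
    exact hg3 f hf
  · intro y hy
    rcases hy with ⟨-, ⟨f, hf, rfl⟩, hyg⟩
    exact (hg3 f hf).subset hU hyg

/-- From a finite subfamily of `(O ∪ ·ᶜ) '' c` for a chain `c`, extract a single member
of the chain bounding the union. -/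
lemma chain_cover_bound {c : Set (Set X)} (hchain : IsChain (· ⊆ ·) c) {B₀ : Set X}
    (hB₀ : B₀ ∈ c) (O : Set X) {F : Set (Set X)} (hFfin : F.Finite)
    (hFS : F ⊆ (fun B : Set X => O ∪ Bᶜ) '' c) :
    ∃ B ∈ c, ⋃₀ F ⊆ O ∪ Bᶜ := by
  classical
  refine Set.Finite.induction_on
    (motive := fun F _ => F ⊆ (fun B : Set X => O ∪ Bᶜ) '' c → ∃ B ∈ c, ⋃₀ F ⊆ O ∪ Bᶜ)
    F hFfin (fun _ => ⟨B₀, hB₀, by simp⟩) ?_ hFS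
  intro a s _ _ ih hsub
  rcases hsub (Set.mem_insert _ _) with ⟨B₁, hB₁, rfl⟩
  rcases ih (fun t ht => hsub (Set.mem_insert_of_mem _ ht)) with ⟨B₂, hB₂, h₂⟩
  rcases hchain.total hB₁ hB₂ with hle | hle
  · refine ⟨B₁, hB₁, ?_⟩
    rw [Set.sUnion_insert]
    refine Set.union_subset subset_rfl (h₂.trans ?_)
    exact Set.union_subset_union_right _ (Set.compl_subset_compl.2 hle)
  · refine ⟨B₂, hB₂, ?_⟩
    rw [Set.sUnion_insert]
    refine Set.union_subset ?_ h₂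
    exact Set.union_subset_union_right _ (Set.compl_subset_compl.2 hle)

/-- Existence of a minimal closed set meeting every `W n \ O`. -/
lemma exists_min_closed (W : ℕ → Set X)
    (hWB : ∀ n, WB (W (n+1)) (W n)) (O : Set X) (hO : IsOpen O)
    (hne : ∀ n, ((W n) \ O).Nonempty) :
    ∃ A : Set X, IsClosed A ∧ (∀ n, (A ∩ (W n \ O)).Nonempty) ∧
      (∀ B, IsClosed B → B ⊆ A → (∀ n, (B ∩ (W n \ O)).Nonempty) → B = A) := by
  classical
  set 𝒜 : Set (Set X) := {B | IsClosed B ∧ ∀ n, (B ∩ (W n \ O)).Nonempty} with h𝒜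
  have huniv : Set.univ ∈ 𝒜 := ⟨isClosed_univ, by simpa using hne⟩
  have H : ∀ c ⊆ 𝒜, IsChain (· ⊆ ·) c → c.Nonempty → ∃ lb ∈ 𝒜, ∀ s ∈ c, lb ⊆ s := by
    intro c hc hchain hcne
    rcases hcne with ⟨B₀, hB₀⟩
    refine ⟨⋂₀ c, ⟨isClosed_sInter fun B hB => (hc hB).1, ?_⟩,
      fun s hs => Set.sInter_subset_of_mem hs⟩
    intro n
    by_contra hemp
    rw [Set.not_nonempty_iff_eq_empty] at hemp
    have hSopen : ∀ V ∈ (fun B : Set X => O ∪ Bᶜ) '' c, IsOpen V := by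
      rintro - ⟨B, hB, rfl⟩
      exact hO.union (hc hB).1.isOpen_compl
    have hcov : W n ⊆ ⋃₀ ((fun B : Set X => O ∪ Bᶜ) '' c) := by
      intro y hy
      by_cases hyO : y ∈ O
      · exact ⟨O ∪ B₀ᶜ, ⟨B₀, hB₀, rfl⟩, Or.inl hyO⟩
      · have hyc : y ∉ ⋂₀ c := by
          intro hyc
          have hmem : y ∈ (⋂₀ c) ∩ (W n \ O) := ⟨hyc, hy, hyO⟩
          rw [hemp] at hmem
          exact hmem
        obtain ⟨B, hBc, hyB⟩ : ∃ B ∈ c, y ∉ B := by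
          by_contra hall
          push_neg at hall
          exact hyc (Set.mem_sInter.2 hall)
        exact ⟨O ∪ Bᶜ, ⟨B, hBc, rfl⟩, Or.inr hyB⟩
    rcases hWB n _ hSopen hcov with ⟨F, hFS, hFfin, hsub⟩
    rcases chain_cover_bound hchain hB₀ O hFfin hFS with ⟨B, hBc, hBsub⟩
    rcases (hc hBc).2 (n + 1) with ⟨y, hyB, hyW, hyO⟩
    rcases hsub.trans hBsub hyW with hy | hy
    · exact hyO hy
    · exact hy hyB
  rcases zorn_superset_nonempty 𝒜 H Set.univ huniv with ⟨A, -, hmin⟩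
  refine ⟨A, hmin.prop.1, hmin.prop.2, fun B hB hBA hBn => ?_⟩
  exact subset_antisymm hBA (hmin.2 ⟨hB, hBn⟩ hBA)

/-- The main lemma: if no `W n` is contained in the open set `O`, then neither is `⋂ W n`. -/
lemma main_lemma (h : OmegaWellFiltered X) (W : ℕ → Set X) (hWo : ∀ n, IsOpen (W n))
    (hWB : ∀ n, WB (W (n+1)) (W n)) (hWdec : ∀ n, W (n+1) ⊆ W n)
    (O : Set X) (hO : IsOpen O) (hne : ∀ n, ¬ W n ⊆ O) :
    ¬ (⋂ n, W n) ⊆ O := by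
  classical
  intro hsub
  have hWmono : ∀ a b : ℕ, a ≤ b → W b ⊆ W a := by
    intro a b hab
    induction b with
    | zero =>
      rcases Nat.le_zero.1 hab with rfl
      exact subset_rfl
    | succ b ih =>
      rcases Nat.lt_or_ge a (b+1) with hlt | hge
      · exact (hWdec b).trans (ih (Nat.lt_succ_iff.1 hlt))
      · have heq : a = b + 1 := le_antisymm hab hge
        subst heq
        exact subset_rfl
  have hne' : ∀ n, ((W n) \ O).Nonempty := by
    intro n
    rcases Set.not_subset.1 (hne n) with ⟨y, hyW, hyO⟩
    exact ⟨y, hyW, hyO⟩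
  rcases exists_min_closed W hWB O hO hne' with ⟨A, hAcl, hAne, hAmin⟩
  -- A misses O
  have hAO : A ⊆ Oᶜ := by
    have heq : A ∩ Oᶜ = A := by
      refine hAmin _ (hAcl.inter (isClosed_compl_iff.2 hO)) Set.inter_subset_left ?_
      intro n
      rcases hAne n with ⟨y, hyA, hyW, hyO⟩
      exact ⟨y, ⟨hyA, hyO⟩, hyW, hyO⟩
    intro y hy
    rw [← heq] at hy
    exact hy.2
  -- the traces
  have hτ : ∀ n, (A ∩ W n).Nonempty := by
    intro n
    rcases hAne n with ⟨y, hyA, hyW, _⟩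
    exact ⟨y, hyA, hyW⟩
  have hmin' : ∀ B, IsClosed B → B ⊆ A → (∀ n, (B ∩ W n).Nonempty) → B = A := by
    intro B hB hBA hBn
    refine hAmin B hB hBA ?_
    intro n
    rcases hBn n with ⟨y, hyB, hyW⟩
    exact ⟨y, hyB, hyW, fun hyO => (hAO (hBA hyB)) hyO⟩
  -- tail absorption: every open set meeting A contains a whole trace
  have hTA : ∀ G : Set X, IsOpen G → (G ∩ A).Nonempty → ∃ k, A ∩ W k ⊆ G := by
    intro G hG hGA
    by_contra hno
    push_neg at hno
    have hBA : A ∩ Gᶜ = A := by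
      refine hmin' _ (hAcl.inter hG.isClosed_compl) Set.inter_subset_left ?_
      intro n
      rcases Set.not_subset.1 (hno n) with ⟨y, ⟨hyA, hyW⟩, hyG⟩
      exact ⟨y, ⟨hyA, hyG⟩, hyW⟩
    rcases hGA with ⟨y, hyG, hyA⟩
    rw [← hBA] at hyA
    exact hyA.2 hyG
  -- a selection through the traces
  choose s hs using hτ
  -- the compact saturated tail sets
  set K : ℕ → Set X := fun j => ⋃ m, ⋃ (_ : j ≤ m), upClo (s m) with hK
  have hmemK : ∀ j y, y ∈ K j ↔ ∃ m, j ≤ m ∧ y ∈ upClo (s m) := by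
    intro j y
    simp [hK, Set.mem_iUnion]
  have hKne : ∀ j, (K j).Nonempty :=
    fun j => ⟨s j, (hmemK j (s j)).2 ⟨j, le_rfl, mem_upClo_self _⟩⟩
  have hKsat : ∀ j, IsSaturatedSet (K j) := by
    intro j x y hx hxy
    rcases (hmemK j x).1 hx with ⟨m, hjm, hxm⟩
    exact (hmemK j y).2 ⟨m, hjm, specLE_trans hxm hxy⟩
  have hKcpt : ∀ j, IsCompact (K j) := by
    intro j
    apply isCompact_of_finite_subcover
    intro ι Uf hUf hcov
    rcases Set.mem_iUnion.1 (hcov ((hmemK j (s j)).2 ⟨j, le_rfl, mem_upClo_self _⟩)) with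
      ⟨i₀, hi₀⟩
    rcases hTA (Uf i₀) (hUf i₀) ⟨s j, hi₀, (hs j).1⟩ with ⟨k, hk⟩
    have hsel : ∀ m, j ≤ m → ∃ i, s m ∈ Uf i := by
      intro m hm
      exact Set.mem_iUnion.1 (hcov ((hmemK j (s m)).2 ⟨m, hm, mem_upClo_self _⟩))
    have : Nonempty ι := ⟨i₀⟩
    choose! g hg using hsel
    refine ⟨insert i₀ ((Finset.range (k+1)).image g), ?_⟩
    intro y hy
    rcases (hmemK j y).1 hy with ⟨m, hjm, hym⟩
    by_cases hmk : k ≤ m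
    · have hsmU : s m ∈ Uf i₀ := hk ⟨(hs m).1, hWmono k m hmk (hs m).2⟩
      exact Set.mem_iUnion₂.2
        ⟨i₀, Finset.mem_insert_self _ _, mem_open_of_specLE (hUf i₀) hsmU hym⟩
    · push_neg at hmk
      refine Set.mem_iUnion₂.2 ⟨g m, ?_, mem_open_of_specLE (hUf (g m)) (hg m hjm) hym⟩
      exact Finset.mem_insert_of_mem
        (Finset.mem_image_of_mem g (Finset.mem_range.2 (Nat.lt_succ_of_lt hmk)))
  have hKfilt : ∀ m n, ∃ k, K k ⊆ K m ∩ K n := by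
    intro m n
    refine ⟨max m n, fun y hy => ?_⟩
    rcases (hmemK _ y).1 hy with ⟨p, hp, hyp⟩
    exact ⟨(hmemK m y).2 ⟨p, le_trans (le_max_left _ _) hp, hyp⟩,
           (hmemK n y).2 ⟨p, le_trans (le_max_right _ _) hp, hyp⟩⟩
  have hnot : ¬ (⋂ j, K j) ⊆ Aᶜ := by
    intro hcon
    rcases h K (fun j => ⟨hKne j, hKcpt j, hKsat j⟩) hKfilt Aᶜ hAcl.isOpen_compl hcon with ⟨j, hj⟩
    exact hj ((hmemK j (s j)).2 ⟨j, le_rfl, mem_upClo_self _⟩) (hs j).1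
  rcases Set.not_subset.1 hnot with ⟨x, hx, hxA⟩
  have hxA' : x ∈ A := by simpa using hxA
  have hxW : ∀ j, x ∈ W j := by
    intro j
    rcases (hmemK j x).1 (Set.mem_iInter.1 hx j) with ⟨m, hjm, hxm⟩
    exact mem_open_of_specLE (hWo j) (hWmono j m hjm (hs m).2) hxm
  exact (hAO hxA') (hsub (Set.mem_iInter.2 hxW))

/-- The hard direction: a core compact ω-well-filtered space is locally compact. -/
lemma coreCompact_locallyCompact (h : OmegaWellFiltered X) (cc : CoreCompact X) :
    LocallyCompactSpace X := by
  classical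
  constructor
  intro x n hn
  rcases mem_nhds_iff.1 hn with ⟨U, hUn, hUo, hxU⟩
  rcases cc U hUo x hxU with ⟨V₀, hV₀o, hxV₀, hV₀U⟩
  have hstepex : ∀ p : {W : Set X // IsOpen W ∧ WB V₀ W ∧ W ⊆ U},
      ∃ q : {W : Set X // IsOpen W ∧ WB V₀ W ∧ W ⊆ U}, WB q.1 p.1 ∧ q.1 ⊆ p.1 := by
    intro p
    rcases wb_interpolate cc p.2.1 p.2.2.1 with ⟨Wn, hWno, hV₀W, hWp, hWsub⟩
    exact ⟨⟨Wn, hWno, hV₀W, hWsub.trans p.2.2.2⟩, hWp, hWsub⟩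
  choose step hstep1 hstep2 using hstepex
  set base : {W : Set X // IsOpen W ∧ WB V₀ W ∧ W ⊆ U} := ⟨U, hUo, hV₀U, subset_rfl⟩ with hbase
  have hWo : ∀ k, IsOpen ((step^[k] base).1) := fun k => (step^[k] base).2.1
  have hWV₀ : ∀ k, WB V₀ ((step^[k] base).1) := fun k => (step^[k] base).2.2.1
  have hWB : ∀ k, WB ((step^[k+1] base).1) ((step^[k] base).1) := by
    intro k
    rw [Function.iterate_succ_apply']
    exact hstep1 _
  have hWdec : ∀ k, (step^[k+1] base).1 ⊆ (step^[k] base).1 := by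
    intro k
    rw [Function.iterate_succ_apply']
    exact hstep2 _
  set K : Set X := ⋂ k, (step^[k] base).1 with hK
  have hV₀K : V₀ ⊆ K := Set.subset_iInter fun k => (hWV₀ k).subset (hWo k)
  have hKU : K ⊆ U := by
    have h0 : (step^[0] base).1 = U := rfl
    exact h0 ▸ Set.iInter_subset (fun k => (step^[k] base).1) 0
  have hKcompact : IsCompact K := by
    apply isCompact_of_finite_subcover
    intro ι Uf hUf hcov
    by_cases hex : ∃ k, (step^[k] base).1 ⊆ ⋃ i, Uf i
    · rcases hex with ⟨k, hk⟩
      have hcov' : (step^[k] base).1 ⊆ ⋃₀ Set.range Uf := by rwa [Set.sUnion_range]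
      rcases hWB k (Set.range Uf) (by rintro - ⟨i, rfl⟩; exact hUf i) hcov' with
        ⟨F, hFR, hFfin, hsub⟩
      rcases Set.eq_empty_or_nonempty F with rfl | ⟨f₀, hf₀⟩
      · exact ⟨∅, fun y hy => absurd (hsub (Set.mem_iInter.1 hy (k+1))) (by simp)⟩
      have : Nonempty ι := ⟨(hFR hf₀).choose⟩
      have hchoice : ∀ f ∈ F, ∃ i, Uf i = f := fun f hf => hFR hf
      choose! g hg using hchoice
      refine ⟨hFfin.toFinset.image g, ?_⟩
      intro y hy
      have hyW : y ∈ (step^[k+1] base).1 := Set.mem_iInter.1 hy (k+1)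
      rcases hsub hyW with ⟨f, hfF, hyf⟩
      refine Set.mem_iUnion₂.2 ⟨g f, Finset.mem_image_of_mem g (hFfin.mem_toFinset.2 hfF), ?_⟩
      rw [hg f hfF]
      exact hyf
    · push_neg at hex
      exact absurd hcov
        (main_lemma h _ hWo hWB hWdec _ (isOpen_iUnion hUf) fun k => hex k)
  exact ⟨K, mem_nhds_iff.2 ⟨V₀, hV₀K, hV₀o, hxV₀⟩, hKU.trans hUn, hKcompact⟩

/-- The easy direction: a locally compact space is core compact. -/
lemma locallyCompact_coreCompact [LocallyCompactSpace X] : CoreCompact X := by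
  intro U hU x hx
  rcases LocallyCompactSpace.local_compact_nhds x U (hU.mem_nhds hx) with ⟨K, hKn, hKU, hK⟩
  refine ⟨interior K, isOpen_interior, mem_interior_iff_mem_nhds.2 hKn, ?_⟩
  intro S hS hUS
  have hKS : K ⊆ ⋃₀ S := hKU.trans hUS
  rw [Set.sUnion_eq_iUnion] at hKS
  rcases hK.elim_finite_subcover (fun W : S => (W : Set X)) (fun W => hS W W.2) hKS with ⟨t, ht⟩
  refine ⟨(fun W : S => (W : Set X)) '' t, ?_, t.finite_toSet.image _, ?_⟩
  · rintro - ⟨W, -, rfl⟩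
    exact W.2
  · refine (interior_subset.trans ht).trans ?_
    intro y hy
    rcases Set.mem_iUnion₂.1 hy with ⟨W, hWt, hyW⟩
    exact ⟨W, ⟨W, hWt, rfl⟩, hyW⟩

end OWF

/-- An ω-well-filtered T0 space is locally compact iff it is core compact (every point of
an open set `U` has an open neighbourhood `V` with `V ≪ U`). -/
theorem omegaWellFiltered_locallyCompact_iff_coreCompact {X : Type*} [TopologicalSpace X]
    [T0Space X] (h : OmegaWellFiltered X) :
    LocallyCompactSpace X ↔
    (∀ U : Set X, IsOpen U → ∀ x ∈ U, ∃ V : Set X, IsOpen V ∧ x ∈ V ∧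
      ∀ S : Set (Set X), (∀ W ∈ S, IsOpen W) → U ⊆ ⋃₀ S →
        ∃ F ⊆ S, F.Finite ∧ V ⊆ ⋃₀ F) := by
  constructor
  · intro _
    exact locallyCompact_coreCompact
  · intro cc
    exact coreCompact_locallyCompact h cc
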